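/- The probability generating function of the sum of independent Bernoulli random variables b_n with success probability r/(n-1+r), n = 1,...,m, equals (Γ(r)/Γ(m+r)) Σ_{k=0}^{m} |s(m,k)| (rz)^k. -/

import Mathlib

/-- Unsigned Stirling numbers of the first kind. -/
def stirling1 : ℕ → ℕ → ℕ
  | 0, 0 => 1
  | 0, _ + 1 => 0
  | _ + 1, 0 => 0
  | m + 1, j + 1 => stirling1 m j + m * stirling1 m (j + 1)

lemma stirling1_eq_zero : ∀ m k : ℕ, m < k → stirling1 m k = 0 := by
  intro m
  induction m with
  | zero => intro k hk; cases k with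
    | zero => omega
    | succ j => simp [stirling1]
  | succ n ih =>
    intro k hk
    cases k with
    | zero => omega
    | succ j =>
      simp only [stirling1]
      rw [ih j (by omega), ih (j+1) (by omega)]
      ring

lemma sum_stirling1 (m : ℕ) (x : ℝ) :
    ∑ k ∈ Finset.range (m + 1), (stirling1 m k : ℝ) * x ^ k
      = ∏ n ∈ Finset.range m, (x + n) := by
  induction m with
  | zero => simp [stirling1]
  | succ n ih =>
    rw [Finset.prod_range_succ, ← ih, Finset.sum_range_succ']
    have h0 : (stirling1 (n+1) 0 : ℝ) = 0 := by simp [stirling1]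
    rw [h0]
    simp only [stirling1, Nat.cast_add, Nat.cast_mul]
    have h1 : ∑ i ∈ Finset.range (n + 1),
        ((stirling1 n i : ℝ) + n * stirling1 n (i+1)) * x ^ (i+1)
        = x * (∑ k ∈ Finset.range (n+1), (stirling1 n k : ℝ) * x ^ k)
          + n * ∑ i ∈ Finset.range (n+1), (stirling1 n (i+1) : ℝ) * x ^ (i+1) := by
      rw [Finset.mul_sum, Finset.mul_sum, ← Finset.sum_add_distrib]
      apply Finset.sum_congr rfl
      intro i _
      ring
    rw [h1]
    have h2 : ∑ i ∈ Finset.range (n+1), (stirling1 n (i+1) : ℝ) * x ^ (i+1)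
        = ∑ k ∈ Finset.range (n+1), (stirling1 n k : ℝ) * x ^ k
          - (stirling1 n 0 : ℝ) + (stirling1 n (n+1) : ℝ) * x ^ (n+1) := by
      have e1 := Finset.sum_range_succ' (fun k => (stirling1 n k : ℝ) * x ^ k) (n+1)
      have e2 := Finset.sum_range_succ (fun k => (stirling1 n k : ℝ) * x ^ k) (n+1)
      simp only [pow_zero, mul_one] at e1 e2 ⊢
      linarith
    rw [h2, stirling1_eq_zero n (n+1) (by omega)]
    have h3 : (n : ℝ) * (stirling1 n 0 : ℝ) = 0 := by
      cases n with
      | zero => simp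
      | succ k => simp [stirling1]
    push_cast
    linear_combination -h3

lemma gamma_prod (r : ℝ) (hr : 0 < r) (m : ℕ) :
    Real.Gamma (m + r) = Real.Gamma r * ∏ n ∈ Finset.range m, ((n : ℝ) + r) := by
  induction m with
  | zero => simp
  | succ n ih =>
    push_cast
    have : (n : ℝ) + 1 + r = ((n : ℝ) + r) + 1 := by ring
    rw [Finset.prod_range_succ, this, Real.Gamma_add_one (by positivity), ih]
    ring

/-- The PGF of the sum of independent Bernoulli(r/(n-1+r)) random variables,
n = 1,…,m, equals (Γ(r)/Γ(m+r)) Σ_{k=0}^m |s(m,k)| (rz)^k. -/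
theorem bernoulli_sum_pgf (r : ℝ) (hr : 0 < r) (m : ℕ) (z : ℝ) :
    (∏ n ∈ Finset.range m, ((n : ℝ) / (n + r) + r / (n + r) * z))
      = Real.Gamma r / Real.Gamma (m + r) *
          ∑ k ∈ Finset.range (m + 1), (stirling1 m k : ℝ) * (r * z) ^ k := by
  have hG : Real.Gamma r > 0 := Real.Gamma_pos_of_pos hr
  rw [sum_stirling1, gamma_prod r hr m]
  have h1 : ∀ n ∈ Finset.range m, (n : ℝ) / (n + r) + r / (n + r) * z
      = (r * z + n) / (n + r) := by
    intro n _
    have : (n : ℝ) + r ≠ 0 := by positivity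
    field_simp
    ring
  rw [Finset.prod_congr rfl h1, Finset.prod_div_distrib]
  have hP : ∏ n ∈ Finset.range m, ((n : ℝ) + r) ≠ 0 := by
    apply Finset.prod_ne_zero_iff.mpr
    intro n _; positivity
  field_simp
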